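/- For all real r > 0, g₂(r) > 0, where g₂(r) = 216r¹² arctan r + 168r¹⁰ arctan r + 216r¹¹ + 843r⁸ arctan r + 96r⁹ + 4986r⁶ arctan r − 3061r⁷ + 8175r⁴ arctan r − 6655r⁵ + 5160r² arctan r − 4800r³ + 1080 arctan r − 1080r. -/

import Mathlib

lemma poly_hasDeriv (y : ℝ) :
    HasDerivAt (fun x : ℝ => x - x^3/3 + x^5/5 - x^7/7 + x^9/9 - x^11/11 + x^13/13 - x^15/15)
      (1 - y^2 + y^4 - y^6 + y^8 - y^10 + y^12 - y^14) y := by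
  have h := (((((((hasDerivAt_id y).sub ((hasDerivAt_pow 3 y).div_const 3)).add
    ((hasDerivAt_pow 5 y).div_const 5)).sub ((hasDerivAt_pow 7 y).div_const 7)).add
    ((hasDerivAt_pow 9 y).div_const 9)).sub ((hasDerivAt_pow 11 y).div_const 11)).add
    ((hasDerivAt_pow 13 y).div_const 13)).sub ((hasDerivAt_pow 15 y).div_const 15)
  refine h.congr_deriv ?_
  push_cast
  ring

lemma arctan_lb (x : ℝ) (hx : 0 ≤ x) :
    x - x^3/3 + x^5/5 - x^7/7 + x^9/9 - x^11/11 + x^13/13 - x^15/15 ≤ Real.arctan x := by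
  set f : ℝ → ℝ := fun x => Real.arctan x - (x - x^3/3 + x^5/5 - x^7/7 + x^9/9 - x^11/11 + x^13/13 - x^15/15) with hf
  have hd : ∀ y : ℝ, HasDerivAt f (1/(1+y^2) - (1 - y^2 + y^4 - y^6 + y^8 - y^10 + y^12 - y^14)) y :=
    fun y => (Real.hasDerivAt_arctan y).sub (poly_hasDeriv y)
  have hmono : MonotoneOn f (Set.Ici (0:ℝ)) := by
    apply monotoneOn_of_deriv_nonneg (convex_Ici 0)
    · exact fun y _ => ((hd y).differentiableAt.continuousAt).continuousWithinAt
    · exact fun y _ => (hd y).differentiableAt.differentiableWithinAt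
    · intro y _
      rw [(hd y).deriv]
      have h1 : (0:ℝ) < 1 + y^2 := by positivity
      have h2 : 1/(1+y^2) - (1 - y^2 + y^4 - y^6 + y^8 - y^10 + y^12 - y^14)
          = y^16/(1+y^2) := by field_simp; ring
      rw [h2]; positivity
  have h0 := hmono (Set.mem_Ici.2 (le_refl (0:ℝ))) (Set.mem_Ici.2 hx) hx
  simp only [hf, Real.arctan_zero] at h0
  norm_num at h0
  linarith

/-- For all real `r > 0`, `g₂(r) > 0`, where `g₂` is the factor
appearing in the Wronskian `W[f₁, …, f₆](r) = −24 r g₂(r)/(r²+1)¹³`. -/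
theorem g2_pos (r : ℝ) (hr : 0 < r) :
    0 < 216 * r ^ 12 * Real.arctan r + 168 * r ^ 10 * Real.arctan r + 216 * r ^ 11
      + 843 * r ^ 8 * Real.arctan r + 96 * r ^ 9
      + 4986 * r ^ 6 * Real.arctan r - 3061 * r ^ 7
      + 8175 * r ^ 4 * Real.arctan r - 6655 * r ^ 5
      + 5160 * r ^ 2 * Real.arctan r - 4800 * r ^ 3
      + 1080 * Real.arctan r - 1080 * r := by
  have hP : (0:ℝ) < 216*r^12 + 168*r^10 + 843*r^8 + 4986*r^6 + 8175*r^4 + 5160*r^2 + 1080 := by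
    positivity
  rcases le_or_gt r 1 with h1 | h1
  · -- small case: use series lower bound for arctan
    have ha := arctan_lb r hr.le
    have key : (0:ℝ) < (216*r^12 + 168*r^10 + 843*r^8 + 4986*r^6 + 8175*r^4 + 5160*r^2 + 1080)
        * (r - r^3/3 + r^5/5 - r^7/7 + r^9/9 - r^11/11 + r^13/13 - r^15/15)
        - (-216*r^11 - 96*r^9 + 3061*r^7 + 6655*r^5 + 4800*r^3 + 1080*r) := by
      have e5 : r^15 ≤ r^5 := pow_le_pow_of_le_one hr.le h1 (by norm_num)
      have e7 : r^15 ≤ r^7 := pow_le_pow_of_le_one hr.le h1 (by norm_num)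
      have e9 : r^15 ≤ r^9 := pow_le_pow_of_le_one hr.le h1 (by norm_num)
      have e11 : r^15 ≤ r^11 := pow_le_pow_of_le_one hr.le h1 (by norm_num)
      have e13 : r^15 ≤ r^13 := pow_le_pow_of_le_one hr.le h1 (by norm_num)
      have e17 : r^17 ≤ r^15 := pow_le_pow_of_le_one hr.le h1 (by norm_num)
      have e19 : r^19 ≤ r^15 := pow_le_pow_of_le_one hr.le h1 (by norm_num)
      have e21 : r^21 ≤ r^15 := pow_le_pow_of_le_one hr.le h1 (by norm_num)
      have e23 : r^23 ≤ r^15 := pow_le_pow_of_le_one hr.le h1 (by norm_num)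
      have e27 : r^27 ≤ r^15 := pow_le_pow_of_le_one hr.le h1 (by norm_num)
      have e25 : (0:ℝ) ≤ r^25 := by positivity
      have e15 : (0:ℝ) < r^15 := by positivity
      nlinarith [e5, e7, e9, e11, e13, e17, e19, e21, e23, e27, e25, e15]
    nlinarith [key, mul_le_mul_of_nonneg_left ha hP.le]
  · -- large case: arctan r ≥ π/4 ≥ 39/50
    have ha : (39:ℝ)/50 ≤ Real.arctan r := by
      have hpi : (39:ℝ)/50 ≤ Real.pi / 4 := by
        nlinarith [Real.pi_gt_d6]
      calc (39:ℝ)/50 ≤ Real.pi / 4 := hpi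
        _ = Real.arctan 1 := Real.arctan_one.symm
        _ ≤ Real.arctan r := Real.arctan_strictMono.monotone h1.le
    have key : (0:ℝ) < (216*r^12 + 168*r^10 + 843*r^8 + 4986*r^6 + 8175*r^4 + 5160*r^2 + 1080)
        * (39/50)
        - (-216*r^11 - 96*r^9 + 3061*r^7 + 6655*r^5 + 4800*r^3 + 1080*r) := by
      nlinarith [sq_nonneg (r-1), sq_nonneg (r-2), pow_nonneg (by linarith : (0:ℝ) ≤ r-1) 3,
        pow_nonneg (by linarith : (0:ℝ) ≤ r-1) 4, pow_nonneg (by linarith : (0:ℝ) ≤ r-1) 5,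
        pow_nonneg (by linarith : (0:ℝ) ≤ r-1) 6, pow_nonneg (by linarith : (0:ℝ) ≤ r-1) 7,
        pow_nonneg (by linarith : (0:ℝ) ≤ r-1) 8, pow_nonneg (by linarith : (0:ℝ) ≤ r-1) 9,
        pow_nonneg (by linarith : (0:ℝ) ≤ r-1) 10, pow_nonneg (by linarith : (0:ℝ) ≤ r-1) 11,
        pow_nonneg (by linarith : (0:ℝ) ≤ r-1) 12]
    nlinarith [key, mul_le_mul_of_nonneg_left ha hP.le]
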